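/- Let r ≥ 3 and let a₁,…,a_r, b₁,…,b_r ∈ ℝ², and consider the lines ℓ_{a_i,b_i} in ℝ³ for i = 1,…,r. If all the lines ℓ_{a_1,b_1},…,ℓ_{a_r,b_r} pass through a common point of ℝ³, then there exists an orientation-preserving isometry T of ℝ² (i.e., an isometry whose linear part has determinant 1) such that T(a_i) = b_i for every i = 1,…,r; in particular the sequences (a₁,…,a_r) and (b₁,…,b_r) are congruent. -/

import Mathlib

/-- Points of the plane `ℝ²` with the Euclidean norm. -/
abbrev Pt := EuclideanSpace ℝ (Fin 2)

/-- Counterclockwise rotation of a vector of `ℝ²` by `π/2`: `(x, y)^⊥ = (-y, x)`. -/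
noncomputable def perp (v : Pt) : Pt := WithLp.toLp 2 ![-(v 1), v 0]

/-- The line `ℓ_{a,b} = { ((a+b)/2 + t·((a−b)/2)^⊥, t) : t ∈ ℝ }` in `ℝ³ = ℝ² × ℝ`. -/
noncomputable def lineOf (a b : Pt) : Set (Pt × ℝ) :=
  {x | ∃ t : ℝ, x = ((2⁻¹ : ℝ) • (a + b) + t • perp ((2⁻¹ : ℝ) • (a - b)), t)}

/-- The direction vector `(((a−b)/2)^⊥, 1)` of the line `ℓ_{a,b}`. -/
noncomputable def dirOf (a b : Pt) : Pt × ℝ := (perp ((2⁻¹ : ℝ) • (a - b)), 1)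

/-- `T : ℝ² → ℝ²` is an isometry (a distance-preserving bijection of the plane,
hence affine with norm-preserving linear part) with linear part of determinant
`e ∈ {1, -1}`. -/
def IsIsometryWithDet (e : ℝ) (T : Pt → Pt) : Prop :=
  ∃ (A : Pt →ₗ[ℝ] Pt) (w : Pt),
    (∀ x : Pt, ‖A x‖ = ‖x‖) ∧ LinearMap.det A = e ∧ ∀ x : Pt, T x = A x + w

lemma perp_apply0 (v : Pt) : perp v 0 = -(v 1) := rfl
lemma perp_apply1 (v : Pt) : perp v 1 = v 0 := rfl

lemma perp_add (x y : Pt) : perp (x + y) = perp x + perp y := by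
  ext i; fin_cases i <;> simp [perp, PiLp.add_apply] <;> ring

lemma perp_smul (m : ℝ) (x : Pt) : perp (m • x) = m • perp x := by
  ext i; fin_cases i <;> simp [perp, PiLp.smul_apply, smul_eq_mul, mul_comm]

lemma perp_neg (x : Pt) : perp (-x) = - perp x := by
  ext i; fin_cases i <;> simp [perp, PiLp.neg_apply]

lemma perp_sub (x y : Pt) : perp (x - y) = perp x - perp y := by
  rw [sub_eq_add_neg, perp_add, perp_neg, sub_eq_add_neg]

lemma perp_perp (x : Pt) : perp (perp x) = -x := by
  ext i; fin_cases i <;> simp [perp, PiLp.neg_apply]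

noncomputable def rotMap (c s : ℝ) : Pt →ₗ[ℝ] Pt where
  toFun x := c • x + s • perp x
  map_add' x y := by rw [perp_add]; module
  map_smul' m x := by simp only [RingHom.id_apply]; rw [perp_smul]; module

lemma rotMap_apply (c s : ℝ) (x : Pt) : rotMap c s x = c • x + s • perp x := rfl

lemma rotMap_norm (c s : ℝ) (h : c^2 + s^2 = 1) (x : Pt) : ‖rotMap c s x‖ = ‖x‖ := by
  rw [EuclideanSpace.norm_eq, EuclideanSpace.norm_eq]
  congr 1
  simp only [Fin.sum_univ_two, rotMap_apply, PiLp.add_apply, PiLp.smul_apply,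
    perp_apply0, perp_apply1, smul_eq_mul, Real.norm_eq_abs, sq_abs]
  linear_combination ((x 0)^2 + (x 1)^2) * h

lemma rotMap_det (c s : ℝ) (h : c^2 + s^2 = 1) : LinearMap.det (rotMap c s) = 1 := by
  rw [← LinearMap.det_toMatrix (EuclideanSpace.basisFun (Fin 2) ℝ).toBasis,
    Matrix.det_fin_two]
  simp only [LinearMap.toMatrix_apply, OrthonormalBasis.coe_toBasis,
    OrthonormalBasis.coe_toBasis_repr_apply, EuclideanSpace.basisFun_repr,
    EuclideanSpace.basisFun_apply, rotMap_apply, PiLp.add_apply, PiLp.smul_apply,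
    perp_apply0, perp_apply1, smul_eq_mul, EuclideanSpace.single_apply]
  norm_num
  linear_combination h

/-- **Lemma 2.1(a).** If `r ≥ 3` and the lines `ℓ_{a_i, b_i}`, `i = 1, …, r`, all
pass through a common point of `ℝ³`, then there is an orientation-preserving
isometry `T` of `ℝ²` (determinant of the linear part equal to `1`) with
`T(a_i) = b_i` for all `i`; in particular `(a_i)` and `(b_i)` are congruent. -/
theorem concurrent_lines_orientation_preserving_congruence
    (r : ℕ) (hr : 3 ≤ r) (a b : Fin r → Pt)
    (h : ∃ x : Pt × ℝ, ∀ i : Fin r, x ∈ lineOf (a i) (b i)) :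
    ∃ T : Pt → Pt, IsIsometryWithDet 1 T ∧ (∀ i : Fin r, T (a i) = b i) ∧
      ∀ i j : Fin r, dist (a i) (a j) = dist (b i) (b j) := by
  obtain ⟨⟨p, t⟩, hx⟩ := h
  have hp : ∀ i, p = (2⁻¹ : ℝ) • (a i + b i) + t • perp ((2⁻¹ : ℝ) • (a i - b i)) := by
    intro i
    obtain ⟨s, hs⟩ := hx i
    rw [Prod.mk.injEq] at hs
    rw [hs.1, ← hs.2]
  have hden : (t^2 + 1 : ℝ) ≠ 0 := by positivity
  obtain ⟨c, s, hcs, h1, h2⟩ : ∃ c s : ℝ, c^2 + s^2 = 1 ∧ c + s*t = -1 ∧ s - c*t = -t :=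
    ⟨(t^2 - 1)/(t^2 + 1), -2*t/(t^2 + 1), by field_simp; ring, by field_simp; ring,
      by field_simp; ring⟩
  have hT : ∀ i, rotMap c s (a i) + (p - rotMap c s p) = b i := by
    intro i
    have e1 : a i - p
        = (2⁻¹ : ℝ) • (a i - b i) - t • perp ((2⁻¹ : ℝ) • (a i - b i)) := by
      rw [hp i]; module
    have e2 : perp (a i - p)
        = perp ((2⁻¹ : ℝ) • (a i - b i)) + t • ((2⁻¹ : ℝ) • (a i - b i)) := by
      rw [e1, perp_sub]; simp only [perp_smul, perp_perp]; module
    have key : rotMap c s (a i - p) = b i - p := by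
      rw [rotMap_apply, e2, e1, hp i]
      match_scalars <;>
        first
          | linear_combination (2⁻¹ : ℝ) * h1
          | linear_combination (-(2⁻¹ : ℝ)) * h1
          | linear_combination h2
          | linear_combination -h2
          | ring
    rw [map_sub] at key
    have e3 : rotMap c s (a i) + (p - rotMap c s p)
        = (rotMap c s (a i) - rotMap c s p) + p := by module
    rw [e3, key]; module
  refine ⟨fun x => rotMap c s x + (p - rotMap c s p),
    ⟨rotMap c s, p - rotMap c s p, fun x => rotMap_norm c s hcs x,
      rotMap_det c s hcs, fun x => rfl⟩, fun i => hT i, ?_⟩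
  intro i j
  rw [← hT i, ← hT j, dist_eq_norm, dist_eq_norm]
  have e4 : (rotMap c s (a i) + (p - rotMap c s p))
      - (rotMap c s (a j) + (p - rotMap c s p)) = rotMap c s (a i - a j) := by
    rw [map_sub]; module
  rw [e4, rotMap_norm c s hcs]
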